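/- Let C, Ĉ ∈ ℝ^{n×n} be SPSD with C − Ĉ SPSD, and suppose additionally that C and Ĉ commute and that C^{1/2} Ĉ^{1/2} = Ĉ, where M^{1/2} denotes the unique SPSD square root of an SPSD matrix M. Then W₂(N(0,C), N(0,Ĉ)) = trace(C − Ĉ)^{1/2}. -/

import Mathlib

open MeasureTheory Matrix
open scoped ENNReal Classical

/-- The standard Gaussian measure on `ι → ℝ`. -/
noncomputable def stdGaussian (ι : Type*) [Fintype ι] : Measure (ι → ℝ) :=
  Measure.pi fun _ => ProbabilityTheory.gaussianReal 0 1

/-- The unique SPSD square root of an SPSD matrix (junk value `0` otherwise). -/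
noncomputable def psdSqrt {ι : Type*} [Fintype ι] [DecidableEq ι] (M : Matrix ι ι ℝ) :
    Matrix ι ι ℝ :=
  if h : M.PosSemidef then
    (h.1.eigenvectorUnitary : Matrix ι ι ℝ) *
      diagonal ((↑) ∘ NNReal.sqrt ∘ Real.toNNReal ∘ h.1.eigenvalues) *
      (star h.1.eigenvectorUnitary : Matrix ι ι ℝ)
  else 0

/-- The centered Gaussian measure `N(0, C)` on `ι → ℝ` with covariance matrix `C`. -/
noncomputable def gaussianOf {ι : Type*} [Fintype ι] [DecidableEq ι] (C : Matrix ι ι ℝ) :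
    Measure (ι → ℝ) :=
  (stdGaussian ι).map (fun x => psdSqrt C *ᵥ x)

/-- `H` is a coupling of `ν` and `νhat`: its two marginals are `ν` and `νhat`. -/
def IsCoupling {E F : Type*} [MeasurableSpace E] [MeasurableSpace F]
    (H : Measure (E × F)) (ν : Measure E) (νhat : Measure F) : Prop :=
  H.map Prod.fst = ν ∧ H.map Prod.snd = νhat

/-- The squared Wasserstein-2 distance (w.r.t. the Euclidean norm) between two measures
on `ι → ℝ`: the infimum over all couplings of the integral of the squared Euclidean
distance. -/
noncomputable def wass2sq {ι : Type*} [Fintype ι] (ν νhat : Measure (ι → ℝ)) : ℝ≥0∞ :=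
  ⨅ (H : Measure ((ι → ℝ) × (ι → ℝ))) (_ : IsCoupling H ν νhat),
    ∫⁻ p, ENNReal.ofReal (∑ i, (p.1 i - p.2 i) ^ 2) ∂H

/-! ### Auxiliary material -/

open Real ProbabilityTheory Set
open scoped NNReal RealInnerProductSpace

namespace Stmt4Aux

/-! #### Moments of the standard real Gaussian -/

lemma int_odd : ∫ x : ℝ, x * rexp (-(2⁻¹) * x ^ 2) = 0 := by
  simp only [neg_mul]
  have h := integral_neg_eq_self (fun x : ℝ => x * rexp (-(2⁻¹ * x ^ 2))) volume
  simp only [neg_sq, neg_mul, integral_neg] at h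
  linarith

lemma integrable_sq_exp : Integrable (fun x : ℝ => x ^ 2 * rexp (-(2⁻¹) * x ^ 2)) := by
  have h := integrable_rpow_mul_exp_neg_mul_sq (by norm_num : (0:ℝ) < 2⁻¹)
      (s := (2:ℝ)) (by norm_num)
  exact h.congr (Filter.Eventually.of_forall fun x => by simp only [rpow_two])

lemma int_even_sq : ∫ x : ℝ, x ^ 2 * rexp (-(2⁻¹) * x ^ 2) = √(2 * π) := by
  have hI : ∫ x in Ioi (0:ℝ), x ^ 2 * rexp (-(2⁻¹) * x ^ 2) = √(2 * π) / 2 := by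
    have h := integral_rpow_mul_exp_neg_mul_rpow (p := 2) (q := 2)
      (b := 2⁻¹) (by norm_num) (by norm_num) (by norm_num)
    simp only [rpow_two] at h
    rw [show (fun x : ℝ => x ^ 2 * rexp (-(2⁻¹) * x ^ 2))
        = fun x : ℝ => x ^ 2 * rexp (-2⁻¹ * x ^ 2) by funext x; ring_nf]
    rw [h, inv_rpow (by norm_num : (0:ℝ) ≤ 2), ← rpow_neg (by norm_num : (0:ℝ) ≤ 2),
      show (-(-(2+1)/2) : ℝ) = 1 + 1/2 by norm_num, rpow_add (by norm_num : (0:ℝ) < 2),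
      rpow_one, ← sqrt_eq_rpow,
      show (2+1)/(2:ℝ) = 1/2 + 1 by norm_num, Gamma_add_one (by norm_num), Gamma_one_half_eq,
      sqrt_mul (by norm_num : (0:ℝ) ≤ 2)]
    ring
  have hsplit := integral_add_compl (measurableSet_Ioi (a := (0:ℝ))) integrable_sq_exp
  rw [compl_Ioi] at hsplit
  have hneg : ∫ x in Iic (0:ℝ), x ^ 2 * rexp (-(2⁻¹) * x ^ 2) = √(2 * π) / 2 := by
    have := integral_comp_neg_Ioi (c := (0:ℝ)) (fun x => x ^ 2 * rexp (-(2⁻¹) * x ^ 2))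
    simp only [neg_sq, neg_zero] at this
    rw [← this, hI]
  rw [hneg, hI] at hsplit
  linarith

lemma gauss_density : gaussianReal 0 1 =
    (volume : Measure ℝ).withDensity fun x => ((gaussianPDFReal 0 1 x).toNNReal : ℝ≥0∞) :=
  gaussianReal_of_var_ne_zero 0 one_ne_zero

lemma pdf_eq (x : ℝ) : gaussianPDFReal 0 1 x = (√(2 * π))⁻¹ * rexp (-(2⁻¹) * x ^ 2) := by
  rw [gaussianPDFReal]
  push_cast
  rw [mul_one, sub_zero]
  ring_nf

lemma smul_eq (g : ℝ → ℝ) : (fun x : ℝ => (gaussianPDFReal 0 1 x).toNNReal • g x)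
    = fun x => (√(2 * π))⁻¹ * (g x * rexp (-(2⁻¹) * x ^ 2)) := by
  funext x
  rw [NNReal.smul_def, smul_eq_mul, Real.coe_toNNReal _ (gaussianPDFReal_nonneg 0 1 x), pdf_eq]
  ring

lemma integrable_id_gauss : Integrable (fun x : ℝ => x) (gaussianReal 0 1) := by
  rw [gauss_density, integrable_withDensity_iff_integrable_smul
      ((measurable_gaussianPDFReal 0 1).real_toNNReal), smul_eq]
  exact (integrable_mul_exp_neg_mul_sq (by norm_num : (0:ℝ) < 2⁻¹)).const_mul _

lemma integrable_sq_gauss : Integrable (fun x : ℝ => x ^ 2) (gaussianReal 0 1) := by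
  rw [gauss_density, integrable_withDensity_iff_integrable_smul
      ((measurable_gaussianPDFReal 0 1).real_toNNReal), smul_eq]
  exact integrable_sq_exp.const_mul _

lemma integral_id_gauss : ∫ x, x ∂(gaussianReal 0 1) = 0 := by
  rw [gauss_density, integral_withDensity_eq_integral_smul
      ((measurable_gaussianPDFReal 0 1).real_toNNReal), smul_eq, integral_const_mul]
  rw [int_odd, mul_zero]

lemma integral_sq_gauss : ∫ x, x ^ 2 ∂(gaussianReal 0 1) = 1 := by
  rw [gauss_density, integral_withDensity_eq_integral_smul
      ((measurable_gaussianPDFReal 0 1).real_toNNReal), smul_eq, integral_const_mul]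
  rw [int_even_sq, inv_mul_cancel₀ (by positivity)]

/-! #### Second moments of the standard Gaussian on `Fin n → ℝ` -/

section PiGauss

noncomputable local instance gaussMS : MeasureSpace ℝ := ⟨gaussianReal 0 1⟩
local instance : IsProbabilityMeasure (volume : Measure ℝ) :=
  inferInstanceAs (IsProbabilityMeasure (gaussianReal 0 1))
local instance : SigmaFinite (volume : Measure ℝ) := inferInstance

variable {n : ℕ} (j k : Fin n)

private noncomputable def ff (j k : Fin n) (i : Fin n) : ℝ → ℝ :=
  fun x => (if i = j then x else 1) * (if i = k then x else 1)

lemma ff_prod (z : Fin n → ℝ) : (∏ i, ff j k i (z i)) = z j * z k := by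
  unfold ff
  rw [Finset.prod_mul_distrib, Finset.prod_ite_eq' Finset.univ j (fun i => z i),
    Finset.prod_ite_eq' Finset.univ k (fun i => z i)]
  simp

lemma ff_integrable (i : Fin n) : Integrable (ff j k i) (gaussianReal 0 1) := by
  unfold ff
  rcases eq_or_ne i j with rfl | hij <;> rcases eq_or_ne i k with rfl | hik
  · simpa [← sq] using integrable_sq_gauss
  · simpa [hik] using integrable_id_gauss
  · simpa [hij] using integrable_id_gauss
  · simpa [hij, hik] using (integrable_const (1:ℝ))

lemma mom_integrable : Integrable (fun z : Fin n → ℝ => z j * z k)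
    (Measure.pi fun _ => gaussianReal 0 1) := by
  have h : Integrable (fun z : Fin n → ℝ => ∏ i, ff j k i (z i)) volume :=
    Integrable.fintype_prod (f := ff j k) (fun i => ff_integrable j k i)
  simp only [ff_prod] at h
  exact h

lemma mom_integral : ∫ z, z j * z k ∂(Measure.pi fun _ => gaussianReal 0 1)
    = if j = k then 1 else 0 := by
  have h : ∫ x : Fin n → ℝ, ∏ i, ff j k i (x i) = ∏ i, ∫ x, ff j k i x :=
    integral_fintype_prod_eq_prod (𝕜 := ℝ) (fun i => ff j k i) (μ := fun _ => volume)
  simp only [ff_prod] at h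
  rw [show (Measure.pi fun _ : Fin n => gaussianReal 0 1) = volume from rfl, h]
  rcases eq_or_ne j k with rfl | hjk
  · rw [Finset.prod_eq_one]
    · simp
    intro i _
    unfold ff
    rcases eq_or_ne i j with rfl | hij
    · simpa [← sq] using (show ∫ x, x ^ 2 ∂(volume : Measure ℝ) = 1 from integral_sq_gauss)
    · simp [hij, show (volume : Measure ℝ) = gaussianReal 0 1 from rfl]
  · rw [Finset.prod_eq_zero (Finset.mem_univ j)]
    · simp [hjk]
    · unfold ff
      simpa [hjk] using (show ∫ x, x ∂(volume : Measure ℝ) = 0 from integral_id_gauss)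

end PiGauss

variable {n : ℕ}

lemma mulVec_sq_expand (A : Matrix (Fin n) (Fin n) ℝ) (i : Fin n) (z : Fin n → ℝ) :
    ((A *ᵥ z) i) ^ 2 = ∑ j, ∑ k, (A i j * A i k) * (z j * z k) := by
  simp only [Matrix.mulVec, dotProduct, pow_two, Finset.sum_mul_sum]
  congr 1; funext j; congr 1; funext k; ring

lemma mulVec_sq_integrable (A : Matrix (Fin n) (Fin n) ℝ) (i : Fin n) :
    Integrable (fun z : Fin n → ℝ => ((A *ᵥ z) i) ^ 2)
      (Measure.pi fun _ => gaussianReal 0 1) := by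
  simp only [mulVec_sq_expand]
  refine integrable_finset_sum _ fun j _ => integrable_finset_sum _ fun k _ => ?_
  exact (mom_integrable j k).const_mul _

lemma mulVec_sq_integral (A : Matrix (Fin n) (Fin n) ℝ) (i : Fin n) :
    ∫ z, ((A *ᵥ z) i) ^ 2 ∂(Measure.pi fun _ => gaussianReal 0 1) = ∑ j, A i j ^ 2 := by
  simp only [mulVec_sq_expand]
  rw [integral_finset_sum _ fun j _ =>
    (integrable_finset_sum _ fun k _ => (mom_integrable j k).const_mul _)]
  have : ∀ j : Fin n, (∫ z, ∑ k, (A i j * A i k) * (z j * z k)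
      ∂(Measure.pi fun _ => gaussianReal 0 1)) = A i j ^ 2 := by
    intro j
    rw [integral_finset_sum _ fun k _ => (mom_integrable j k).const_mul _]
    have : ∀ k : Fin n, (∫ z, (A i j * A i k) * (z j * z k)
        ∂(Measure.pi fun _ => gaussianReal 0 1)) = if j = k then A i j ^ 2 else 0 := by
      intro k
      rw [integral_const_mul, mom_integral]
      rcases eq_or_ne j k with rfl | h
      · simp [sq]
      · simp [h]
    simp only [this, Finset.sum_ite_eq, Finset.mem_univ, if_true]
  simp only [this]

lemma key_lintegral (A : Matrix (Fin n) (Fin n) ℝ) :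
    ∫⁻ z, ENNReal.ofReal (∑ i, ((A *ᵥ z) i) ^ 2) ∂(stdGaussian (Fin n))
      = ENNReal.ofReal (∑ i, ∑ j, A i j ^ 2) := by
  rw [_root_.stdGaussian, ← ofReal_integral_eq_lintegral_ofReal
    (integrable_finset_sum _ fun i _ => mulVec_sq_integrable A i)
    (Filter.Eventually.of_forall fun z =>
      Finset.sum_nonneg fun i _ => sq_nonneg _)]
  rw [integral_finset_sum _ fun i _ => mulVec_sq_integrable A i]
  simp only [mulVec_sq_integral]

/-! #### Matrix helpers -/

lemma psdSqrt_of (C : Matrix (Fin n) (Fin n) ℝ) (hC : C.PosSemidef) :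
    psdSqrt C = (hC.1.eigenvectorUnitary : Matrix (Fin n) (Fin n) ℝ) *
      diagonal ((↑) ∘ NNReal.sqrt ∘ Real.toNNReal ∘ hC.1.eigenvalues) *
      (star hC.1.eigenvectorUnitary : Matrix (Fin n) (Fin n) ℝ) := dif_pos hC

lemma psdSqrt_mul_self (C : Matrix (Fin n) (Fin n) ℝ) (hC : C.PosSemidef) :
    psdSqrt C * psdSqrt C = C := by
  rw [psdSqrt_of C hC]
  have hd : diagonal (((↑) ∘ NNReal.sqrt ∘ Real.toNNReal ∘ hC.1.eigenvalues) : Fin n → ℝ) *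
      diagonal ((↑) ∘ NNReal.sqrt ∘ Real.toNNReal ∘ hC.1.eigenvalues)
      = diagonal (RCLike.ofReal ∘ hC.1.eigenvalues) := by
    rw [diagonal_mul_diagonal]
    congr 1
    funext i
    simp only [Function.comp_apply, Real.coe_sqrt,
      Real.coe_toNNReal _ (hC.eigenvalues_nonneg i), RCLike.ofReal_real_eq_id, id]
    exact Real.mul_self_sqrt (hC.eigenvalues_nonneg i)
  simp only [Matrix.mul_assoc]
  rw [← Matrix.mul_assoc (star hC.1.eigenvectorUnitary : Matrix (Fin n) (Fin n) ℝ),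
    Unitary.coe_star_mul_self, Matrix.one_mul, ← Matrix.mul_assoc _ _ (star _ : Matrix _ _ ℝ), hd]
  conv_rhs => rw [hC.1.spectral_theorem, Unitary.conjStarAlgAut_apply]
  rw [Matrix.mul_assoc]

lemma psdSqrt_transpose (C : Matrix (Fin n) (Fin n) ℝ) (hC : C.PosSemidef) :
    (psdSqrt C)ᵀ = psdSqrt C := by
  rw [psdSqrt_of C hC, ← conjTranspose_eq_transpose_of_trivial]
  simp [Matrix.conjTranspose_mul, Matrix.mul_assoc, Matrix.star_eq_conjTranspose]

lemma sym_dot (M : Matrix (Fin n) (Fin n) ℝ) (hM : Mᵀ = M) (z : Fin n → ℝ) :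
    ∑ i, ((M *ᵥ z) i)^2 = z ⬝ᵥ ((M * M) *ᵥ z) := by
  have h1 : ∑ i, ((M *ᵥ z) i)^2 = (M *ᵥ z) ⬝ᵥ (M *ᵥ z) := by
    simp [dotProduct, sq]
  rw [h1, dotProduct_mulVec, ← mulVec_transpose, hM, mulVec_mulVec, dotProduct_comm]

lemma meas_mulVec (M : Matrix (Fin n) (Fin n) ℝ) :
    Measurable (fun z : Fin n → ℝ => M *ᵥ z) := by
  refine measurable_pi_lambda _ fun i => ?_
  simpa [Matrix.mulVec, dotProduct] using
    Finset.measurable_sum (f := fun j (c : Fin n → ℝ) => M i j * c j) Finset.univ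
      (fun j _ => (measurable_pi_apply j : Measurable fun x : Fin n → ℝ => x j).const_mul (M i j))

/-! #### Orthogonal projection onto the range of a matrix -/

noncomputable def Vsub (B : Matrix (Fin n) (Fin n) ℝ) : Submodule ℝ (EuclideanSpace ℝ (Fin n)) :=
  LinearMap.range ((WithLp.linearEquiv 2 ℝ (Fin n → ℝ)).symm.toLinearMap ∘ₗ B.mulVecLin)

lemma mem_Vsub (B : Matrix (Fin n) (Fin n) ℝ) (w : Fin n → ℝ) :
    (WithLp.toLp 2 (B *ᵥ w) : EuclideanSpace ℝ (Fin n)) ∈ Vsub B := ⟨w, rfl⟩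

noncomputable def projFun (B : Matrix (Fin n) (Fin n) ℝ) : (Fin n → ℝ) → (Fin n → ℝ) :=
  fun x => WithLp.ofLp ((Vsub B).orthogonalProjectionOnto (WithLp.toLp 2 x) : EuclideanSpace ℝ (Fin n))

lemma inner_eq_dot (x y : EuclideanSpace ℝ (Fin n)) : ⟪x, y⟫ = ∑ i, x i * y i := by
  simp [PiLp.inner_apply, RCLike.inner_apply, mul_comm]

lemma projFun_measurable (B : Matrix (Fin n) (Fin n) ℝ) : Measurable (projFun B) := by
  have : projFun B = ⇑((WithLp.linearEquiv 2 ℝ (Fin n → ℝ)).toLinearMap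
      ∘ₗ ((Vsub B).subtype ∘ₗ ((Vsub B).orthogonalProjectionOnto : _ →ₗ[ℝ] _))
      ∘ₗ (WithLp.linearEquiv 2 ℝ (Fin n → ℝ)).symm.toLinearMap) := rfl
  rw [this]
  exact LinearMap.continuous_of_finiteDimensional _ |>.measurable

lemma projFun_of_mem (B : Matrix (Fin n) (Fin n) ℝ) (w : Fin n → ℝ) :
    projFun B (B *ᵥ w) = B *ᵥ w := by
  have := Submodule.starProjection_eq_self_iff.mpr (mem_Vsub B w)
  exact congrArg WithLp.ofLp this

lemma proj_pt (B : Matrix (Fin n) (Fin n) ℝ) (x y : Fin n → ℝ) (hy : projFun B y = y) :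
    (∑ i, (x i)^2 - ∑ i, (projFun B x i)^2) ≤ ∑ i, (x i - y i)^2 := by
  set x' : EuclideanSpace ℝ (Fin n) := WithLp.toLp 2 x with hx'
  set y' : EuclideanSpace ℝ (Fin n) := WithLp.toLp 2 y with hy'
  have e1 : ∑ i, (x i - y i)^2 = ⟪x' - y', x' - y'⟫ := by
    rw [inner_eq_dot]
    refine Finset.sum_congr rfl fun i _ => ?_
    have : (x' - y') i = x i - y i := rfl
    rw [this, sq]
  have e2 : ∑ i, (x i)^2 = ⟪x', x'⟫ := by
    rw [inner_eq_dot]; exact Finset.sum_congr rfl fun i _ => sq (x i)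
  have e3 : ∑ i, (projFun B x i)^2
      = ⟪((Vsub B).orthogonalProjectionOnto x' : EuclideanSpace ℝ (Fin n)),
         ((Vsub B).orthogonalProjectionOnto x' : EuclideanSpace ℝ (Fin n))⟫ := by
    rw [inner_eq_dot]
    exact Finset.sum_congr rfl fun i _ => sq _
  set Px : EuclideanSpace ℝ (Fin n) := ((Vsub B).orthogonalProjectionOnto x' : EuclideanSpace ℝ (Fin n))
  have hxy : ⟪x', y'⟫ = ⟪Px, y'⟫ := by
    conv_lhs => rw [show y' = ((Vsub B).orthogonalProjectionOnto y' : EuclideanSpace ℝ (Fin n)) from (congrArg (WithLp.toLp 2) hy).symm]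
    exact (Submodule.inner_starProjection_left_eq_right (Vsub B) x' y').symm
  have hnn : (0:ℝ) ≤ ⟪Px - y', Px - y'⟫ := real_inner_self_nonneg
  have expand1 : ⟪x' - y', x' - y'⟫ = ⟪x',x'⟫ - 2 * ⟪x',y'⟫ + ⟪y',y'⟫ := by
    rw [inner_sub_sub_self, real_inner_comm y' x']; ring
  have expand2 : ⟪Px - y', Px - y'⟫ = ⟪Px,Px⟫ - 2 * ⟪Px,y'⟫ + ⟪y',y'⟫ := by
    rw [inner_sub_sub_self, real_inner_comm y' Px]; ring
  rw [e1, e2, e3]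
  linarith [hxy, hnn, expand1, expand2]

end Stmt4Aux

open Stmt4Aux

/-- if `C`, `Ĉ` and `C - Ĉ` are SPSD, `C` and `Ĉ` commute and
`C^{1/2} Ĉ^{1/2} = Ĉ`, then `W₂(N(0,C), N(0,Ĉ))² = trace (C - Ĉ)`. -/
theorem stmt4 {n : ℕ} (C Chat : Matrix (Fin n) (Fin n) ℝ)
    (hC : C.PosSemidef) (hChat : Chat.PosSemidef) (hdiff : (C - Chat).PosSemidef)
    (hcomm : C * Chat = Chat * C) (hsqrt : psdSqrt C * psdSqrt Chat = Chat) :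
    wass2sq (gaussianOf C) (gaussianOf Chat) = ENNReal.ofReal (C - Chat).trace := by
  set sC := psdSqrt C with hsCdef
  set sH := psdSqrt Chat with hsHdef
  set D := sC - sH with hDdef
  -- matrix algebra
  have hCC : sC * sC = C := psdSqrt_mul_self C hC
  have hHH : sH * sH = Chat := psdSqrt_mul_self Chat hChat
  have hCt : sCᵀ = sC := psdSqrt_transpose C hC
  have hHt : sHᵀ = sH := psdSqrt_transpose Chat hChat
  have hCH : sC * sH = Chat := hsqrt
  have hHC : sH * sC = Chat := by
    have := congrArg Matrix.transpose hCH
    rw [Matrix.transpose_mul, hCt, hHt] at this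
    rw [this, ← Matrix.conjTranspose_eq_transpose_of_trivial]
    exact hChat.isHermitian
  have hDt : Dᵀ = D := by rw [hDdef, Matrix.transpose_sub, hCt, hHt]
  have hDD : D * D = C - Chat := by
    rw [hDdef, Matrix.sub_mul, Matrix.mul_sub, Matrix.mul_sub, hCC, hCH, hHC, hHH]
    abel
  have hHD : sH * D = 0 := by
    rw [hDdef, Matrix.mul_sub, hHC, hHH, sub_self]
  -- trace identity
  have htrace : ∑ i, ∑ j, D i j ^ 2 = (C - Chat).trace := by
    rw [← hDD, Matrix.trace]
    refine Finset.sum_congr rfl fun i _ => ?_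
    rw [Matrix.diag_apply, Matrix.mul_apply]
    refine Finset.sum_congr rfl fun j _ => ?_
    have : D j i = D i j := (congrFun (congrFun hDt j) i).symm
    rw [this, sq]
  -- pointwise identity
  have hdot : ∀ z : Fin n → ℝ, ∑ i, ((D *ᵥ z) i)^2
      = ∑ i, ((sC *ᵥ z) i)^2 - ∑ i, ((sH *ᵥ z) i)^2 := by
    intro z
    rw [sym_dot D hDt z, sym_dot sC hCt z, sym_dot sH hHt z, hDD, hCC, hHH,
      Matrix.sub_mulVec, dotProduct_sub]
  -- the common value of both bounds
  have hkey := key_lintegral D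
  -- projection facts
  have hproj : ∀ z : Fin n → ℝ, projFun sH (sC *ᵥ z) = sH *ᵥ z := by
    intro z
    have key : ((Vsub sH).orthogonalProjectionOnto (WithLp.toLp 2 (sC *ᵥ z) : EuclideanSpace ℝ (Fin n))
        : EuclideanSpace ℝ (Fin n)) = (WithLp.toLp 2 (sH *ᵥ z) : EuclideanSpace ℝ (Fin n)) := by
      refine Submodule.eq_starProjection_of_mem_of_inner_eq_zero (mem_Vsub sH z) ?_
      rintro w ⟨a, rfl⟩
      have h0 : ((WithLp.toLp 2 (sC *ᵥ z) : EuclideanSpace ℝ (Fin n)) - (WithLp.toLp 2 (sH *ᵥ z) : EuclideanSpace ℝ (Fin n)))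
          = (WithLp.toLp 2 (D *ᵥ z) : EuclideanSpace ℝ (Fin n)) := by
        rw [hDdef, Matrix.sub_mulVec, WithLp.toLp_sub]
      rw [h0]
      have hw : ((WithLp.linearEquiv 2 ℝ (Fin n → ℝ)).symm.toLinearMap ∘ₗ sH.mulVecLin) a
          = (WithLp.toLp 2 (sH *ᵥ a) : EuclideanSpace ℝ (Fin n)) := rfl
      rw [hw, inner_eq_dot]
      have h1 : ∑ i, (WithLp.toLp 2 (D *ᵥ z) : EuclideanSpace ℝ (Fin n)) i * (WithLp.toLp 2 (sH *ᵥ a) : EuclideanSpace ℝ (Fin n)) i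
          = (D *ᵥ z) ⬝ᵥ (sH *ᵥ a) := rfl
      rw [h1, dotProduct_mulVec, ← mulVec_transpose, hHt, mulVec_mulVec, hHD]
      simp
    exact congrArg WithLp.ofLp key
  -- measurability of the cost integrand
  have mInt : Measurable (fun p : (Fin n → ℝ) × (Fin n → ℝ) =>
      ENNReal.ofReal (∑ i, (p.1 i - p.2 i) ^ 2)) := by
    refine Measurable.ennreal_ofReal ?_
    refine Finset.measurable_sum _ fun i _ => ?_
    exact (((measurable_pi_apply i).comp measurable_fst).sub
      ((measurable_pi_apply i).comp measurable_snd)).pow_const 2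
  refine le_antisymm ?_ ?_
  · -- upper bound via the explicit coupling
    set T : (Fin n → ℝ) → (Fin n → ℝ) × (Fin n → ℝ) := fun z => (sC *ᵥ z, sH *ᵥ z) with hTdef
    have mT : Measurable T := (meas_mulVec sC).prodMk (meas_mulVec sH)
    have hcoup : IsCoupling ((stdGaussian (Fin n)).map T) (gaussianOf C) (gaussianOf Chat) := by
      constructor
      · rw [Measure.map_map measurable_fst mT]; rfl
      · rw [Measure.map_map measurable_snd mT]; rfl
    refine le_trans (iInf_le_of_le ((stdGaussian (Fin n)).map T) (iInf_le_of_le hcoup le_rfl)) ?_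
    rw [lintegral_map mInt mT]
    have : ∀ z : Fin n → ℝ, (∑ i, ((T z).1 i - (T z).2 i) ^ 2) = ∑ i, ((D *ᵥ z) i)^2 := by
      intro z
      refine Finset.sum_congr rfl fun i _ => ?_
      rw [hTdef, hDdef, Matrix.sub_mulVec]
      rfl
    refine le_of_eq ?_
    calc ∫⁻ z, ENNReal.ofReal (∑ i, ((T z).1 i - (T z).2 i) ^ 2) ∂(stdGaussian (Fin n))
        = ∫⁻ z, ENNReal.ofReal (∑ i, ((D *ᵥ z) i)^2) ∂(stdGaussian (Fin n)) := by
          exact lintegral_congr fun z => by rw [this z]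
      _ = ENNReal.ofReal (∑ i, ∑ j, D i j ^ 2) := hkey
      _ = ENNReal.ofReal (C - Chat).trace := by rw [htrace]
  · -- lower bound
    refine le_iInf fun H => le_iInf fun hH => ?_
    obtain ⟨h1, h2⟩ := hH
    -- a.e. the second coordinate is fixed by the projection
    have hS : MeasurableSet {x : Fin n → ℝ | projFun sH x = x} :=
      measurableSet_eq_fun (projFun_measurable sH) measurable_id
    have hae : ∀ᵐ p ∂H, projFun sH p.2 = p.2 := by
      rw [MeasureTheory.ae_iff]
      have hpre : (fun z : Fin n → ℝ => sH *ᵥ z) ⁻¹'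
          {x : Fin n → ℝ | projFun sH x = x}ᶜ = ∅ := by
        ext z
        simp [projFun_of_mem sH z]
      calc H {p | ¬ projFun sH p.2 = p.2}
          = H (Prod.snd ⁻¹' {x : Fin n → ℝ | projFun sH x = x}ᶜ) := rfl
        _ = (H.map Prod.snd) {x : Fin n → ℝ | projFun sH x = x}ᶜ :=
            (Measure.map_apply measurable_snd hS.compl).symm
        _ = (gaussianOf Chat) {x : Fin n → ℝ | projFun sH x = x}ᶜ := by rw [h2]
        _ = (stdGaussian (Fin n)) ((fun z => sH *ᵥ z) ⁻¹'
              {x : Fin n → ℝ | projFun sH x = x}ᶜ) := by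
            rw [gaussianOf, Measure.map_apply (meas_mulVec sH) hS.compl]
        _ = 0 := by rw [hpre]; simp
    -- the measurable lower-bound integrand
    set g : (Fin n → ℝ) → ℝ := fun x => ∑ i, (x i)^2 - ∑ i, (projFun sH x i)^2 with hgdef
    have mg : Measurable (fun x : Fin n → ℝ => ENNReal.ofReal (g x)) := by
      refine Measurable.ennreal_ofReal ?_
      refine Measurable.sub ?_ ?_
      · exact Finset.measurable_sum _ fun i _ => (measurable_pi_apply i).pow_const 2
      · exact Finset.measurable_sum _ fun i _ =>
          ((measurable_pi_apply i).comp (projFun_measurable sH)).pow_const 2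
    have hmono : ∫⁻ p, ENNReal.ofReal (g p.1) ∂H
        ≤ ∫⁻ p, ENNReal.ofReal (∑ i, (p.1 i - p.2 i) ^ 2) ∂H := by
      refine lintegral_mono_ae ?_
      filter_upwards [hae] with p hp
      exact ENNReal.ofReal_le_ofReal (proj_pt sH p.1 p.2 hp)
    refine le_trans (le_of_eq ?_) hmono
    calc ENNReal.ofReal (C - Chat).trace
        = ENNReal.ofReal (∑ i, ∑ j, D i j ^ 2) := by rw [htrace]
      _ = ∫⁻ z, ENNReal.ofReal (∑ i, ((D *ᵥ z) i)^2) ∂(stdGaussian (Fin n)) := hkey.symm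
      _ = ∫⁻ z, ENNReal.ofReal (g (sC *ᵥ z)) ∂(stdGaussian (Fin n)) := by
          refine lintegral_congr fun z => ?_
          rw [hgdef]
          simp only []
          rw [hproj z, ← hdot z]
      _ = ∫⁻ x, ENNReal.ofReal (g x) ∂(gaussianOf C) := by
          rw [gaussianOf, lintegral_map mg (meas_mulVec sC)]
      _ = ∫⁻ x, ENNReal.ofReal (g x) ∂(H.map Prod.fst) := by rw [h1]
      _ = ∫⁻ p, ENNReal.ofReal (g p.1) ∂H := lintegral_map mg measurable_fst
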